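/- Let m ∈ C⁰([−1,1]) satisfy m(s) > 0 for |s| < 1 and m(±1) = 0, and suppose that for some ε₀ ∈ (0,1], m is non-increasing on [1−ε₀,1] and non-decreasing on [−1,−1+ε₀]. Let c₇ > 0 and let P ∈ C⁰([−1,1]) be non-negative with √(P(s)) ≤ c₇ m(s) for all s ∈ [−1,−1+ε₀] ∪ [1−ε₀,1]. Then there exists a constant C > 0, independent of ε, such that for every ε ∈ (0,ε₀] and all s ∈ ℝ: |√(P_ε(s)) M_ε′(s)| ≤ c₇|s| + C. -/

import Mathlib

open Set MeasureTheory

/-- The truncated (non-degenerate) mobility `m_ε`. -/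
noncomputable def mEps (m : ℝ → ℝ) (ε s : ℝ) : ℝ :=
  if 1 - ε ≤ s then m (1 - ε) else if s ≤ -1 + ε then m (-1 + ε) else m s

/-- The derivative `M_ε′` of the approximate entropy, `M_ε′(s) = ∫₀^s 1/m_ε(r) dr`
(so that `m_ε M_ε″ = 1`, `M_ε(0) = M_ε′(0) = 0`). -/
noncomputable def mEpsEntropyPrime (m : ℝ → ℝ) (ε s : ℝ) : ℝ :=
  ∫ r in (0 : ℝ)..s, (mEps m ε r)⁻¹

/-- The truncated nonlinearity `P_ε`. -/
noncomputable def pEps (P : ℝ → ℝ) (ε s : ℝ) : ℝ :=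
  if 1 - ε ≤ s then P (1 - ε) else if s ≤ -1 + ε then P (-1 + ε) else P s

theorem stmt_10
    (m P : ℝ → ℝ)
    (hmcont : ContinuousOn m (Icc (-1 : ℝ) 1))
    (hmpos : ∀ s ∈ Ioo (-1 : ℝ) 1, 0 < m s)
    (hm1 : m 1 = 0) (hm1' : m (-1) = 0)
    (ε₀ : ℝ) (hε₀ : ε₀ ∈ Ioc (0 : ℝ) 1)
    (hmonoP : ∀ s t : ℝ, 1 - ε₀ ≤ s → s ≤ t → t ≤ 1 → m t ≤ m s)
    (hmonoM : ∀ s t : ℝ, -1 ≤ s → s ≤ t → t ≤ -1 + ε₀ → m s ≤ m t)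
    (c₇ : ℝ) (hc₇ : 0 < c₇)
    (hPcont : ContinuousOn P (Icc (-1 : ℝ) 1))
    (hPnonneg : ∀ s ∈ Icc (-1 : ℝ) 1, 0 ≤ P s)
    (hPm : ∀ s ∈ Icc (-1 : ℝ) (-1 + ε₀) ∪ Icc (1 - ε₀) 1, Real.sqrt (P s) ≤ c₇ * m s) :
    ∃ C : ℝ, 0 < C ∧ ∀ ε : ℝ, 0 < ε → ε ≤ ε₀ → ∀ s : ℝ,
      |Real.sqrt (pEps P ε s) * mEpsEntropyPrime m ε s| ≤ c₇ * |s| + C := by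
  obtain ⟨hε₀pos, hε₀le⟩ := hε₀
  obtain ⟨x₀, hx₀mem, hx₀min⟩ := isCompact_Icc.exists_isMinOn
    (⟨0, by constructor <;> linarith⟩ : (Icc (-1+ε₀) (1-ε₀)).Nonempty)
    (hmcont.mono (fun x hx => ⟨by linarith [hx.1], by linarith [hx.2]⟩))
  have hμpos : 0 < m x₀ := hmpos x₀ ⟨by linarith [hx₀mem.1], by linarith [hx₀mem.2]⟩
  set μ := m x₀ with hμdef
  obtain ⟨y₀, hy₀mem, hy₀max⟩ := isCompact_Icc.exists_isMaxOn
    (⟨0, by constructor <;> linarith⟩ : (Icc (-1:ℝ) 1).Nonempty) hPcont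
  set B := Real.sqrt (P y₀) with hBdef
  have hBnn : 0 ≤ B := Real.sqrt_nonneg _
  refine ⟨2*B/μ + c₇ + 1, by positivity, ?_⟩
  intro ε hεpos hεle s
  have hεle1 : ε ≤ 1 := le_trans hεle hε₀le
  set c : ℝ → ℝ := fun r => max (-1+ε) (min (1-ε) r) with hcdef
  have hcmem : ∀ r, c r ∈ Icc (-1+ε) (1-ε) := by
    intro r
    exact ⟨le_max_left _ _, max_le (by linarith) (min_le_left _ _)⟩
  have hcmem' : ∀ r, c r ∈ Icc (-1:ℝ) 1 := fun r =>
    ⟨by linarith [(hcmem r).1], by linarith [(hcmem r).2]⟩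
  have hcmono : ∀ x y : ℝ, x ≤ y → c x ≤ c y := fun x y h =>
    max_le_max le_rfl (min_le_min le_rfl h)
  have hmE : ∀ r, mEps m ε r = m (c r) := by
    intro r
    unfold mEps
    simp only [hcdef]
    split_ifs with h1 h2
    · rw [min_eq_left h1, max_eq_right (by linarith)]
    · rw [min_eq_right (by linarith), max_eq_left h2]
    · rw [min_eq_right (by linarith), max_eq_right (by linarith)]
  have hpE : ∀ r, pEps P ε r = P (c r) := by
    intro r
    unfold pEps
    simp only [hcdef]
    split_ifs with h1 h2
    · rw [min_eq_left h1, max_eq_right (by linarith)]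
    · rw [min_eq_right (by linarith), max_eq_left h2]
    · rw [min_eq_right (by linarith), max_eq_right (by linarith)]
  have hmEpos : ∀ r, 0 < mEps m ε r := by
    intro r; rw [hmE r]
    exact hmpos _ ⟨by linarith [(hcmem r).1], by linarith [(hcmem r).2]⟩
  have hccont : Continuous c := continuous_const.max (continuous_const.min continuous_id)
  have hcontm : Continuous (fun r => mEps m ε r) := by
    have h := hmcont.comp_continuous hccont hcmem'
    have he : (fun r => mEps m ε r) = m ∘ c := funext hmE
    rw [he]; exact h
  have hcontinv : Continuous (fun r => (mEps m ε r)⁻¹) :=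
    hcontm.inv₀ (fun r => (hmEpos r).ne')
  have hInt : ∀ a b : ℝ, IntervalIntegrable (fun r => (mEps m ε r)⁻¹) volume a b :=
    fun a b => hcontinv.intervalIntegrable a b
  have hPB : ∀ r, Real.sqrt (pEps P ε r) ≤ B := by
    intro r; rw [hpE r]; exact Real.sqrt_le_sqrt (isMaxOn_iff.mp hy₀max _ (hcmem' r))
  have hPnn : ∀ r, 0 ≤ Real.sqrt (pEps P ε r) := fun r => Real.sqrt_nonneg _
  -- bound on the middle part of the integral
  have hmid : ∀ t : ℝ, |t| ≤ 1 - ε₀ →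
      |∫ r in (0:ℝ)..t, (mEps m ε r)⁻¹| ≤ 2/μ := by
    intro t ht
    have habs := abs_le.mp ht
    have h1 : ‖∫ r in (0:ℝ)..t, (mEps m ε r)⁻¹‖ ≤ μ⁻¹ * |t - 0| := by
      apply intervalIntegral.norm_integral_le_of_norm_le_const
      intro x hx
      have hx' : -1+ε₀ ≤ x ∧ x ≤ 1-ε₀ := by
        rcases Set.mem_uIoc.mp hx with ⟨ha, hb⟩ | ⟨ha, hb⟩ <;> constructor <;> linarith
      have hcx : c x = x := by
        simp only [hcdef]
        rw [min_eq_right (by linarith), max_eq_right (by linarith)]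
      have hmx : μ ≤ mEps m ε x := by
        rw [hmE x, hcx]; exact isMinOn_iff.mp hx₀min x ⟨hx'.1, hx'.2⟩
      rw [Real.norm_eq_abs, abs_of_nonneg (inv_nonneg.mpr (hmEpos x).le)]
      exact inv_anti₀ hμpos hmx
    rw [Real.norm_eq_abs] at h1
    have h2 : μ⁻¹ * |t - 0| ≤ μ⁻¹ * 2 := by
      apply mul_le_mul_of_nonneg_left _ (inv_nonneg.mpr hμpos.le)
      rw [sub_zero]; linarith
    calc |∫ r in (0:ℝ)..t, (mEps m ε r)⁻¹| ≤ μ⁻¹ * |t - 0| := h1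
      _ ≤ μ⁻¹ * 2 := h2
      _ = 2/μ := by rw [div_eq_mul_inv]; ring
  unfold mEpsEntropyPrime
  rcases le_or_gt s (1-ε₀) with hs1 | hs1
  · rcases le_or_gt (-(1-ε₀)) s with hs2 | hs2
    · -- middle case
      rw [abs_mul, abs_of_nonneg (hPnn s)]
      have hm1 := hmid s (abs_le.mpr ⟨by linarith, hs1⟩)
      have hle : Real.sqrt (pEps P ε s) * |∫ r in (0:ℝ)..s, (mEps m ε r)⁻¹| ≤ B * (2/μ) :=
        mul_le_mul (hPB s) hm1 (abs_nonneg _) hBnn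
      have heq : B * (2/μ) = 2*B/μ := by ring
      have hcn : 0 ≤ c₇ * |s| := mul_nonneg hc₇.le (abs_nonneg s)
      linarith
    · -- left case : s < -(1-ε₀)
      have hsplit : (∫ r in (0:ℝ)..(-(1-ε₀)), (mEps m ε r)⁻¹)
            + ∫ r in (-(1-ε₀))..s, (mEps m ε r)⁻¹
          = ∫ r in (0:ℝ)..s, (mEps m ε r)⁻¹ :=
        intervalIntegral.integral_add_adjacent_intervals (hInt _ _) (hInt _ _)
      have hcs : -1 ≤ c s ∧ c s ≤ -(1-ε₀) := by
        have h1 : c s = max (-1+ε) s := by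
          simp only [hcdef]; rw [min_eq_right (by linarith)]
        exact ⟨(hcmem' s).1, by rw [h1]; exact max_le (by linarith) hs2.le⟩
      have htail : |∫ r in (-(1-ε₀))..s, (mEps m ε r)⁻¹|
          ≤ (mEps m ε s)⁻¹ * |s - (-(1-ε₀))| := by
        rw [← Real.norm_eq_abs (∫ r in (-(1-ε₀))..s, (mEps m ε r)⁻¹)]
        apply intervalIntegral.norm_integral_le_of_norm_le_const
        intro x hx
        have hx' : s ≤ x ∧ x ≤ -(1-ε₀) := by
          rcases Set.mem_uIoc.mp hx with ⟨ha, hb⟩ | ⟨ha, hb⟩ <;> constructor <;> linarith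
        have hcx : c x ≤ -1+ε₀ := by
          have h1 : c x = max (-1+ε) x := by
            simp only [hcdef]; rw [min_eq_right (by linarith)]
          rw [h1]; exact max_le (by linarith) (by linarith)
        have hmono : mEps m ε s ≤ mEps m ε x := by
          rw [hmE s, hmE x]
          exact hmonoM (c s) (c x) hcs.1 (hcmono s x hx'.1) hcx
        rw [Real.norm_eq_abs, abs_of_nonneg (inv_nonneg.mpr (hmEpos x).le)]
        exact inv_anti₀ (hmEpos s) hmono
      rw [abs_of_nonpos (by linarith : s - (-(1-ε₀)) ≤ 0)] at htail
      have hPs : Real.sqrt (pEps P ε s) ≤ c₇ * mEps m ε s := by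
        rw [hpE s, hmE s]
        exact hPm (c s) (Or.inl ⟨hcs.1, by linarith [hcs.2]⟩)
      have hI1 := hmid (-(1-ε₀)) (by rw [abs_of_nonpos (by linarith)]; linarith)
      have hM : |∫ r in (0:ℝ)..s, (mEps m ε r)⁻¹|
          ≤ |∫ r in (0:ℝ)..(-(1-ε₀)), (mEps m ε r)⁻¹|
            + |∫ r in (-(1-ε₀))..s, (mEps m ε r)⁻¹| := by
        rw [← hsplit]; exact abs_add_le _ _
      rw [abs_mul, abs_of_nonneg (hPnn s)]
      have hne : mEps m ε s ≠ 0 := (hmEpos s).ne'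
      have e1 : Real.sqrt (pEps P ε s) * |∫ r in (0:ℝ)..(-(1-ε₀)), (mEps m ε r)⁻¹|
          ≤ B * (2/μ) := mul_le_mul (hPB s) hI1 (abs_nonneg _) hBnn
      have e2 : Real.sqrt (pEps P ε s) * |∫ r in (-(1-ε₀))..s, (mEps m ε r)⁻¹|
          ≤ c₇ * (-(s - (-(1-ε₀)))) := by
        calc Real.sqrt (pEps P ε s) * |∫ r in (-(1-ε₀))..s, (mEps m ε r)⁻¹|
            ≤ (c₇ * mEps m ε s) * ((mEps m ε s)⁻¹ * (-(s - (-(1-ε₀))))) :=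
              mul_le_mul hPs htail (abs_nonneg _)
                (mul_nonneg hc₇.le (hmEpos s).le)
          _ = c₇ * (-(s - (-(1-ε₀)))) := by field_simp
      have hfin : Real.sqrt (pEps P ε s) * |∫ r in (0:ℝ)..s, (mEps m ε r)⁻¹|
          ≤ B * (2/μ) + c₇ * (-(s - (-(1-ε₀)))) := by
        calc Real.sqrt (pEps P ε s) * |∫ r in (0:ℝ)..s, (mEps m ε r)⁻¹|
            ≤ Real.sqrt (pEps P ε s) * (|∫ r in (0:ℝ)..(-(1-ε₀)), (mEps m ε r)⁻¹|
              + |∫ r in (-(1-ε₀))..s, (mEps m ε r)⁻¹|) :=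
              mul_le_mul_of_nonneg_left hM (hPnn s)
          _ = _ + _ := mul_add _ _ _
          _ ≤ B * (2/μ) + c₇ * (-(s - (-(1-ε₀)))) := add_le_add e1 e2
      rw [abs_of_neg (by linarith : s < 0)]
      have heq : B * (2/μ) = 2*B/μ := by ring
      nlinarith [mul_le_mul_of_nonneg_left
        (show -(s - (-(1-ε₀))) ≤ -s by linarith) hc₇.le]
  · -- right case : 1-ε₀ < s
    have hsplit : (∫ r in (0:ℝ)..(1-ε₀), (mEps m ε r)⁻¹)
          + ∫ r in (1-ε₀)..s, (mEps m ε r)⁻¹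
        = ∫ r in (0:ℝ)..s, (mEps m ε r)⁻¹ :=
      intervalIntegral.integral_add_adjacent_intervals (hInt _ _) (hInt _ _)
    have hcs : 1-ε₀ ≤ c s ∧ c s ≤ 1 := by
      have h1 : c s = min (1-ε) s := max_eq_right (le_min (by linarith) (by linarith))
      constructor
      · rw [h1]; exact le_min (by linarith) hs1.le
      · exact (hcmem' s).2
    have htail : |∫ r in (1-ε₀)..s, (mEps m ε r)⁻¹|
        ≤ (mEps m ε s)⁻¹ * |s - (1-ε₀)| := by
      rw [← Real.norm_eq_abs (∫ r in (1-ε₀)..s, (mEps m ε r)⁻¹)]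
      apply intervalIntegral.norm_integral_le_of_norm_le_const
      intro x hx
      have hx' : 1-ε₀ ≤ x ∧ x ≤ s := by
        rcases Set.mem_uIoc.mp hx with ⟨ha, hb⟩ | ⟨ha, hb⟩ <;> constructor <;> linarith
      have hcx : 1-ε₀ ≤ c x := by
        have h1 : c x = min (1-ε) x := max_eq_right (le_min (by linarith) (by linarith))
        rw [h1]; exact le_min (by linarith) hx'.1
      have hmono : mEps m ε s ≤ mEps m ε x := by
        rw [hmE s, hmE x]
        exact hmonoP (c x) (c s) hcx (hcmono x s hx'.2) (hcmem' s).2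
      rw [Real.norm_eq_abs, abs_of_nonneg (inv_nonneg.mpr (hmEpos x).le)]
      exact inv_anti₀ (hmEpos s) hmono
    rw [abs_of_nonneg (by linarith : (0:ℝ) ≤ s - (1-ε₀))] at htail
    have hPs : Real.sqrt (pEps P ε s) ≤ c₇ * mEps m ε s := by
      rw [hpE s, hmE s]
      exact hPm (c s) (Or.inr ⟨hcs.1, hcs.2⟩)
    have hI1 := hmid (1-ε₀) (by rw [abs_of_nonneg (by linarith)])
    have hM : |∫ r in (0:ℝ)..s, (mEps m ε r)⁻¹|
        ≤ |∫ r in (0:ℝ)..(1-ε₀), (mEps m ε r)⁻¹|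
          + |∫ r in (1-ε₀)..s, (mEps m ε r)⁻¹| := by
      rw [← hsplit]; exact abs_add_le _ _
    rw [abs_mul, abs_of_nonneg (hPnn s)]
    have hne : mEps m ε s ≠ 0 := (hmEpos s).ne'
    have e1 : Real.sqrt (pEps P ε s) * |∫ r in (0:ℝ)..(1-ε₀), (mEps m ε r)⁻¹|
        ≤ B * (2/μ) := mul_le_mul (hPB s) hI1 (abs_nonneg _) hBnn
    have e2 : Real.sqrt (pEps P ε s) * |∫ r in (1-ε₀)..s, (mEps m ε r)⁻¹|
        ≤ c₇ * (s - (1-ε₀)) := by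
      calc Real.sqrt (pEps P ε s) * |∫ r in (1-ε₀)..s, (mEps m ε r)⁻¹|
          ≤ (c₇ * mEps m ε s) * ((mEps m ε s)⁻¹ * (s - (1-ε₀))) :=
            mul_le_mul hPs htail (abs_nonneg _)
              (mul_nonneg hc₇.le (hmEpos s).le)
        _ = c₇ * (s - (1-ε₀)) := by field_simp
    have hfin : Real.sqrt (pEps P ε s) * |∫ r in (0:ℝ)..s, (mEps m ε r)⁻¹|
        ≤ B * (2/μ) + c₇ * (s - (1-ε₀)) := by
      calc Real.sqrt (pEps P ε s) * |∫ r in (0:ℝ)..s, (mEps m ε r)⁻¹|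
          ≤ Real.sqrt (pEps P ε s) * (|∫ r in (0:ℝ)..(1-ε₀), (mEps m ε r)⁻¹|
            + |∫ r in (1-ε₀)..s, (mEps m ε r)⁻¹|) :=
            mul_le_mul_of_nonneg_left hM (hPnn s)
        _ = _ + _ := mul_add _ _ _
        _ ≤ B * (2/μ) + c₇ * (s - (1-ε₀)) := add_le_add e1 e2
    rw [abs_of_pos (by linarith : (0:ℝ) < s)]
    have heq : B * (2/μ) = 2*B/μ := by ring
    nlinarith [mul_le_mul_of_nonneg_left (show s - (1-ε₀) ≤ s by linarith) hc₇.le]
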